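/- arXiv:1808.10216 — 8 statements merged into one kernel-verified Lean document; each statement's English description precedes it below -/
import Mathlib

section
/- The first canonical connection ∇⁰ of a (J²=±1)-metric manifold, defined by ∇⁰_X Y = ∇ᵍ_X Y + (-α/2)(∇ᵍ_X J)(JY), satisfies ∇⁰J = 0 and ∇⁰g = 0. -/
/- Abstract algebraic model of a `(J² = ±1)`-metric manifold:
`V` plays the role of the module of (smooth) vector fields (an `ℝ`-vector space),
`F` plays the role of the ring of smooth functions (an `ℝ`-algebra),
`g : V →ₗ[ℝ] V →ₗ[ℝ] F` the metric, `J : V →ₗ[ℝ] V` the almost (para)complex/product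
structure, `nabla : V → V →ₗ[ℝ] V` the Levi-Civita connection, `Xact X : F →ₗ[ℝ] F`
the action of the vector field `X` on functions (`Xact X f = X f`), and
`bracket` the Lie bracket of vector fields. -/

variable {V : Type*} [AddCommGroup V] [Module ℝ V]

/-- The covariant derivative `(∇_X J) Y = ∇_X (J Y) - J (∇_X Y)`. -/
def nablaJ (nabla : V → V →ₗ[ℝ] V) (J : V →ₗ[ℝ] V) (X Y : V) : V :=
  nabla X (J Y) - J (nabla X Y)

/-- The first canonical connection `∇⁰_X Y = ∇_X Y + (-α/2) • (∇_X J)(J Y)`. -/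
noncomputable def canon (α : ℝ) (nabla : V → V →ₗ[ℝ] V) (J : V →ₗ[ℝ] V) (X Y : V) : V :=
  nabla X Y - (α / 2) • nablaJ nabla J X (J Y)

/-- The torsion `T⁰(X,Y) = ∇⁰_X Y - ∇⁰_Y X - [X,Y]` of the first canonical connection. -/
noncomputable def torsion0 (α : ℝ) (nabla : V → V →ₗ[ℝ] V) (J : V →ₗ[ℝ] V)
    (bracket : V → V → V) (X Y : V) : V :=
  canon α nabla J X Y - canon α nabla J Y X - bracket X Y

/-- The Nijenhuis tensor of `J`, expressed through the Levi-Civita connection: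
`N_J(X,Y) = (∇_X J)(JY) + (∇_{JX} J)Y - (∇_Y J)(JX) - (∇_{JY} J)X`. -/
def nijenhuis (nabla : V → V →ₗ[ℝ] V) (J : V →ₗ[ℝ] V) (X Y : V) : V :=
  nablaJ nabla J X (J Y) + nablaJ nabla J (J X) Y
    - nablaJ nabla J Y (J X) - nablaJ nabla J (J Y) X

/-- The first canonical connection `∇⁰` satisfies `∇⁰J = 0` and `∇⁰g = 0`. -/
theorem stmt6 {F : Type*} [CommRing F] [Algebra ℝ F]
    (α ε : ℝ) (hα : α = 1 ∨ α = -1) (hε : ε = 1 ∨ ε = -1)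
    (J : V →ₗ[ℝ] V) (hJ2 : ∀ x, J (J x) = α • x)
    (g : V →ₗ[ℝ] V →ₗ[ℝ] F) (hgsymm : ∀ x y, g x y = g y x)
    (hJg : ∀ x y, g (J x) (J y) = ε • g x y)
    (nabla : V → V →ₗ[ℝ] V) (Xact : V → F →ₗ[ℝ] F)
    (hcompat : ∀ X Y Z : V, Xact X (g Y Z) = g (nabla X Y) Z + g Y (nabla X Z)) :
    (∀ X Y : V, canon α nabla J X (J Y) = J (canon α nabla J X Y)) ∧
      (∀ X Y Z : V,
        Xact X (g Y Z) = g (canon α nabla J X Y) Z + g Y (canon α nabla J X Z)) := by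
  have hα2 : α * α = 1 := by rcases hα with h | h <;> rw [h] <;> norm_num
  have hA : ∀ X Y : V, nablaJ nabla J X (J Y) = -J (nablaJ nabla J X Y) := by
    intro X Y
    simp only [nablaJ, hJ2, map_sub, map_smul]
    abel
  have hstar : ∀ X A B : V,
      g (nablaJ nabla J X A) (J B) + g (J A) (nablaJ nabla J X B) = 0 := by
    intro X A B
    have h1 := hcompat X (J A) (J B)
    have h2 := hcompat X A B
    rw [hJg, map_smul] at h1
    simp only [nablaJ, map_sub, LinearMap.sub_apply, LinearMap.map_sub, hJg]
    simp only [Algebra.smul_def] at h1 h2 ⊢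
    linear_combination algebraMap ℝ F ε * h2 - h1
  have hJswap : ∀ u w : V, g (J u) w = (α * ε) • g u (J w) := by
    intro u w
    have h := hJg u (J w)
    rw [hJ2, map_smul] at h
    have h' := congrArg (fun t => α • t) h
    simp only [smul_smul, hα2, one_smul] at h'
    exact h'
  constructor
  · intro X Y
    simp only [canon, hA, nablaJ, map_sub, map_neg, map_smul, smul_neg, neg_neg, hJ2]
    rcases hα with h | h <;> subst h <;> module
  · intro X Y Z
    rw [hcompat X Y Z]
    simp only [canon, map_sub, LinearMap.sub_apply, LinearMap.map_sub, map_smul,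
      LinearMap.smul_apply, LinearMap.map_smul]
    have key : g (nablaJ nabla J X (J Y)) Z + g Y (nablaJ nabla J X (J Z)) = 0 := by
      rw [hA X Y, hA X Z]
      have e1 : g (-J (nablaJ nabla J X Y)) Z = -((α * ε) • g (nablaJ nabla J X Y) (J Z)) := by
        rw [map_neg, LinearMap.neg_apply, hJswap]
      have e2 : g Y (-J (nablaJ nabla J X Z)) = -((α * ε) • g (J Y) (nablaJ nabla J X Z)) := by
        rw [hgsymm Y, map_neg, LinearMap.neg_apply, hJswap,
          hgsymm (nablaJ nabla J X Z) (J Y)]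
      rw [e1, e2, ← neg_add, ← smul_add, hstar X Y Z]
      simp
    simp only [Algebra.smul_def] at key ⊢
    linear_combination algebraMap ℝ F (α / 2) * key
end

section
/- A (J²=±1)-metric manifold is of Kähler type (∇ᵍJ = 0) if and only if the torsion T⁰ of its first canonical connection vanishes identically. -/
/- Abstract algebraic model of a `(J² = ±1)`-metric manifold:
`V` plays the role of the module of (smooth) vector fields (an `ℝ`-vector space),
`F` plays the role of the ring of smooth functions (an `ℝ`-algebra),
`g : V →ₗ[ℝ] V →ₗ[ℝ] F` the metric, `J : V →ₗ[ℝ] V` the almost (para)complex/product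
structure, `nabla : V → V →ₗ[ℝ] V` the Levi-Civita connection, `Xact X : F →ₗ[ℝ] F`
the action of the vector field `X` on functions (`Xact X f = X f`), and
`bracket` the Lie bracket of vector fields. -/

variable {V : Type*} [AddCommGroup V] [Module ℝ V]

/-- In an `ℝ`-module, `t + t = 0` forces `t = 0`. -/
lemma aux_half {F : Type*} [AddCommMonoid F] [Module ℝ F] (t : F) (h : t + t = 0) : t = 0 := by
  have h2 : (2:ℝ) • t = 0 := by rw [two_smul]; exact h
  calc t = (1:ℝ) • t := (one_smul _ _).symm
    _ = ((1/2:ℝ) * 2) • t := by norm_num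
    _ = (1/2:ℝ) • ((2:ℝ) • t) := mul_smul _ _ _
    _ = 0 := by rw [h2, smul_zero]

/-- A `(J²=±1)`-metric manifold is of Kähler type iff the torsion of its first
canonical connection vanishes identically. -/
theorem stmt8 {F : Type*} [CommRing F] [Algebra ℝ F]
    (α ε : ℝ) (hα : α = 1 ∨ α = -1) (hε : ε = 1 ∨ ε = -1)
    (J : V →ₗ[ℝ] V) (hJ2 : ∀ x, J (J x) = α • x)
    (g : V →ₗ[ℝ] V →ₗ[ℝ] F) (hgsymm : ∀ x y, g x y = g y x)
    (hgnd : ∀ x : V, (∀ y : V, g x y = 0) → x = 0)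
    (hJg : ∀ x y, g (J x) (J y) = ε • g x y)
    (nabla : V → V →ₗ[ℝ] V) (Xact : V → F →ₗ[ℝ] F)
    (hcompat : ∀ X Y Z : V, Xact X (g Y Z) = g (nabla X Y) Z + g Y (nabla X Z))
    (bracket : V → V → V)
    (htf : ∀ X Y : V, nabla X Y - nabla Y X = bracket X Y) :
    (∀ X Y : V, nablaJ nabla J X Y = 0) ↔
      (∀ X Y : V, torsion0 α nabla J bracket X Y = 0) := by
  have hα2 : α * α = 1 := by rcases hα with h | h <;> norm_num [h]
  have hαne : α ≠ 0 := by rcases hα with h | h <;> norm_num [h]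
  have hβ : α * ε = 1 ∨ α * ε = -1 := by
    rcases hα with h | h <;> rcases hε with h' | h' <;> norm_num [h, h']
  -- (∇_X J) anticommutes with J
  have hanti : ∀ X Y : V, nablaJ nabla J X (J Y) = - J (nablaJ nabla J X Y) := by
    intro X Y
    simp only [nablaJ, hJ2, map_smul, map_sub, neg_sub]
  -- moving J across the metric
  have fact2 : ∀ u v : V, g (J u) v = (α * ε) • g u (J v) := by
    intro u v
    have h := hJg u (J v)
    rw [hJ2, map_smul] at h
    have h2 := congrArg (fun t => α • t) h
    simp only [smul_smul, hα2, one_smul] at h2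
    exact h2
  -- differentiating the compatibility of g and J
  have fact3 : ∀ X Y Z : V,
      g (nablaJ nabla J X Y) (J Z) + g (J Y) (nablaJ nabla J X Z) = 0 := by
    intro X Y Z
    have h1 := hcompat X (J Y) (J Z)
    have h2 := hcompat X Y Z
    have h3 : Xact X (g (J Y) (J Z)) = ε • Xact X (g Y Z) := by
      rw [hJg, map_smul]
    rw [h1, h2] at h3
    have e1 : nabla X (J Y) = nablaJ nabla J X Y + J (nabla X Y) := by
      simp [nablaJ]
    have e2 : nabla X (J Z) = nablaJ nabla J X Z + J (nabla X Z) := by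
      simp [nablaJ]
    rw [e1, e2] at h3
    simp only [map_add, LinearMap.add_apply, hJg, smul_add] at h3
    linear_combination h3
  -- the key (anti)symmetry of g((∇_X J)Y, Z) in Y and Z
  have fact4 : ∀ X Y Z : V,
      g (nablaJ nabla J X Y) Z = (α * ε) • g (nablaJ nabla J X Z) Y := by
    intro X Y Z
    have h := fact3 X Y (J Z)
    rw [hJ2, map_smul] at h
    rw [hanti] at h
    simp only [map_neg, LinearMap.map_neg, hJg] at h
    have h2 := congrArg (fun t => α • t) h
    simp only [smul_add, smul_neg, smul_smul, hα2, one_smul, smul_zero] at h2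
    rw [hgsymm (nablaJ nabla J X Z) Y]
    linear_combination h2
  constructor
  · -- Kähler type ⟹ T⁰ = 0
    intro h X Y
    simp only [torsion0, canon, h, smul_zero, sub_zero, htf]
    abel
  · -- T⁰ = 0 ⟹ Kähler type
    intro htor
    -- symmetry of (∇_X J)(JY) in X and Y
    have hsymJ : ∀ X Y : V, nablaJ nabla J X (J Y) = nablaJ nabla J Y (J X) := by
      intro X Y
      have h0 := htor X Y
      simp only [torsion0, canon, ← htf] at h0
      have h1 : (α / 2) • nablaJ nabla J Y (J X) - (α / 2) • nablaJ nabla J X (J Y) = 0 := by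
        rw [← h0]; abel
      have h2 : (α / 2) • (nablaJ nabla J Y (J X) - nablaJ nabla J X (J Y)) = 0 := by
        rw [smul_sub]; exact h1
      have h3 := smul_right_injective V (div_ne_zero hαne two_ne_zero) (by
        rw [h2, smul_zero] : (α / 2) • (nablaJ nabla J Y (J X) - nablaJ nabla J X (J Y))
          = (α / 2) • (0 : V))
      exact (sub_eq_zero.mp h3).symm
    -- symmetry of (∇_X J)Y in X and Y
    have hsym : ∀ X Y : V, nablaJ nabla J X Y = nablaJ nabla J Y X := by
      intro X Y
      have h1 := hsymJ X Y
      rw [hanti, hanti, neg_inj] at h1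
      have h2 : J (J (nablaJ nabla J X Y)) = J (J (nablaJ nabla J Y X)) := by rw [h1]
      rw [hJ2, hJ2] at h2
      exact smul_right_injective V hαne h2
    -- (∇_{JX} J)Y = -J (∇_X J)Y
    have hJfirst : ∀ X Y : V, nablaJ nabla J (J X) Y = - J (nablaJ nabla J X Y) := by
      intro X Y
      rw [hsym (J X) Y, hanti Y X, hsym Y X]
    rcases hβ with hβ | hβ
    · -- α ε = 1 : use the J-trick
      have hC0 : ∀ X u v : V, g (nablaJ nabla J (J X) u) v = 0 := by
        intro X u v
        have chain : ∀ u v : V,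
            g (nablaJ nabla J (J X) u) v = - g (nablaJ nabla J X u) (J v) := by
          intro u v
          rw [hJfirst]
          simp only [map_neg, LinearMap.neg_apply]
          rw [fact2, hβ, one_smul]
        have chain2 : ∀ u v : V,
            g (nablaJ nabla J X u) (J v) = g (nablaJ nabla J (J X) v) u := by
          intro u v
          rw [fact4 X u (J v), hβ, one_smul, hanti]
          simp only [map_neg, LinearMap.neg_apply, LinearMap.map_neg]
          rw [fact2, hβ, one_smul, ← chain v u]
        have s1 : g (nablaJ nabla J (J X) u) v = g (nablaJ nabla J (J X) v) u := by
          rw [fact4, hβ, one_smul]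
        have s2 : g (nablaJ nabla J (J X) u) v = - g (nablaJ nabla J (J X) v) u := by
          rw [chain, chain2]
        apply aux_half
        nth_rewrite 1 [s2]
        rw [← s1]
        abel
      intro X Y
      have hX : J (α • J X) = X := by
        rw [map_smul, hJ2, smul_smul, hα2, one_smul]
      apply hgnd
      intro Z
      rw [← hX]
      exact hC0 (α • J X) Y Z
    · -- α ε = -1 : pure symmetry chasing
      intro X Y
      apply hgnd
      intro Z
      have key : g (nablaJ nabla J X Y) Z =
          (α*ε) • ((α*ε) • ((α*ε) • g (nablaJ nabla J X Y) Z)) := by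
        calc g (nablaJ nabla J X Y) Z
            = (α*ε) • g (nablaJ nabla J X Z) Y := fact4 X Y Z
          _ = (α*ε) • g (nablaJ nabla J Z X) Y := by rw [hsym X Z]
          _ = (α*ε) • ((α*ε) • g (nablaJ nabla J Z Y) X) := by rw [fact4 Z X Y]
          _ = (α*ε) • ((α*ε) • g (nablaJ nabla J Y Z) X) := by rw [hsym Z Y]
          _ = (α*ε) • ((α*ε) • ((α*ε) • g (nablaJ nabla J Y X) Z)) := by rw [fact4 Y Z X]
          _ = (α*ε) • ((α*ε) • ((α*ε) • g (nablaJ nabla J X Y) Z)) := by rw [hsym Y X]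
      rw [hβ] at key
      simp only [neg_smul, one_smul, smul_neg, neg_neg] at key
      apply aux_half
      nth_rewrite 2 [key]
      abel
end

section
/- On a (J²=±1)-metric manifold, the Nijenhuis tensor N_J and the torsion T⁰ of the first canonical connection satisfy -½ N_J(X,Y) = T⁰(JX,JY) + α T⁰(X,Y) for all vector fields X,Y. -/
/- Abstract algebraic model of a `(J² = ±1)`-metric manifold:
`V` plays the role of the module of (smooth) vector fields (an `ℝ`-vector space),
`F` plays the role of the ring of smooth functions (an `ℝ`-algebra),
`g : V →ₗ[ℝ] V →ₗ[ℝ] F` the metric, `J : V →ₗ[ℝ] V` the almost (para)complex/product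
structure, `nabla : V → V →ₗ[ℝ] V` the Levi-Civita connection, `Xact X : F →ₗ[ℝ] F`
the action of the vector field `X` on functions (`Xact X f = X f`), and
`bracket` the Lie bracket of vector fields. -/

variable {V : Type*} [AddCommGroup V] [Module ℝ V]

/-- `-½ N_J(X,Y) = T⁰(JX,JY) + α T⁰(X,Y)`. -/
theorem stmt9 (α : ℝ) (hα : α = 1 ∨ α = -1)
    (J : V →ₗ[ℝ] V) (hJ2 : ∀ x, J (J x) = α • x)
    (nabla : V → V →ₗ[ℝ] V) (bracket : V → V → V)
    (htf : ∀ X Y : V, nabla X Y - nabla Y X = bracket X Y) :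
    ∀ X Y : V,
      -((1 / 2 : ℝ) • nijenhuis nabla J X Y)
        = torsion0 α nabla J bracket (J X) (J Y)
            + α • torsion0 α nabla J bracket X Y := by
  intro X Y
  rcases hα with h | h <;> subst h <;>
    simp only [nijenhuis, torsion0, canon, nablaJ, ← htf, hJ2, map_sub, map_smul,
      one_smul, neg_smul, map_neg, smul_neg, neg_neg] <;> module
end

section
/- J is integrable (N_J = 0) on a (J²=±1)-metric manifold if and only if T⁰(JX,JY) + α T⁰(X,Y) = 0 for all vector fields X,Y, where T⁰ is the torsion of the first canonical connection. -/
/- Abstract algebraic model of a `(J² = ±1)`-metric manifold: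
`V` plays the role of the module of (smooth) vector fields (an `ℝ`-vector space),
`F` plays the role of the ring of smooth functions (an `ℝ`-algebra),
`g : V →ₗ[ℝ] V →ₗ[ℝ] F` the metric, `J : V →ₗ[ℝ] V` the almost (para)complex/product
structure, `nabla : V → V →ₗ[ℝ] V` the Levi-Civita connection, `Xact X : F →ₗ[ℝ] F`
the action of the vector field `X` on functions (`Xact X f = X f`), and
`bracket` the Lie bracket of vector fields. -/

variable {V : Type*} [AddCommGroup V] [Module ℝ V]

/-- `J` is integrable (`N_J = 0`) iff `T⁰(JX,JY) + α T⁰(X,Y) = 0` for all `X, Y`. -/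
theorem stmt10 (α : ℝ) (hα : α = 1 ∨ α = -1)
    (J : V →ₗ[ℝ] V) (hJ2 : ∀ x, J (J x) = α • x)
    (nabla : V → V →ₗ[ℝ] V) (bracket : V → V → V)
    (htf : ∀ X Y : V, nabla X Y - nabla Y X = bracket X Y) :
    (∀ X Y : V, nijenhuis nabla J X Y = 0) ↔
      (∀ X Y : V,
        torsion0 α nabla J bracket (J X) (J Y)
          + α • torsion0 α nabla J bracket X Y = 0) := by
  have key : ∀ X Y : V,
      torsion0 α nabla J bracket (J X) (J Y) + α • torsion0 α nabla J bracket X Y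
        = -(1/2 : ℝ) • nijenhuis nabla J X Y := by
    intro X Y
    rcases hα with rfl | rfl <;>
      simp only [torsion0, canon, nijenhuis, nablaJ, ← htf, hJ2, map_smul] <;>
      module
  constructor
  · intro h X Y
    rw [key, h X Y, smul_zero]
  · intro h X Y
    have := h X Y
    rw [key] at this
    have h2 : (-(1/2 : ℝ)) ≠ 0 := by norm_num
    exact (smul_eq_zero.mp this).resolve_left h2
end

section
/- Let (M,J,g) be a (J²=±1)-metric manifold with αε = 1 (almost Norden or almost product Riemannian). If (∇ᵍ_X J)Y + (∇ᵍ_Y J)X = 0 for all vector fields X,Y, then ∇ᵍJ = 0, i.e., (M,J,g) is a Kähler type manifold. -/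
/- Abstract algebraic model of a `(J² = ±1)`-metric manifold:
`V` plays the role of the module of (smooth) vector fields (an `ℝ`-vector space),
`F` plays the role of the ring of smooth functions (an `ℝ`-algebra),
`g : V →ₗ[ℝ] V →ₗ[ℝ] F` the metric, `J : V →ₗ[ℝ] V` the almost (para)complex/product
structure, `nabla : V → V →ₗ[ℝ] V` the Levi-Civita connection, `Xact X : F →ₗ[ℝ] F`
the action of the vector field `X` on functions (`Xact X f = X f`), and
`bracket` the Lie bracket of vector fields. -/

variable {V : Type*} [AddCommGroup V] [Module ℝ V]

/-- If `αε = 1` and `(∇ᵍ_X J)Y + (∇ᵍ_Y J)X = 0` for all `X, Y`, the manifold is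
of Kähler type, i.e. `∇ᵍJ = 0`. -/
theorem stmt11 {F : Type*} [CommRing F] [Algebra ℝ F]
    (α ε : ℝ) (hα : α = 1 ∨ α = -1) (hε : ε = 1 ∨ ε = -1) (hαε : α * ε = 1)
    (J : V →ₗ[ℝ] V) (hJ2 : ∀ x, J (J x) = α • x)
    (g : V →ₗ[ℝ] V →ₗ[ℝ] F) (hgsymm : ∀ x y, g x y = g y x)
    (hgnd : ∀ x : V, (∀ y : V, g x y = 0) → x = 0)
    (hJg : ∀ x y, g (J x) (J y) = ε • g x y)
    (nabla : V → V →ₗ[ℝ] V) (Xact : V → F →ₗ[ℝ] F)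
    (hcompat : ∀ X Y Z : V, Xact X (g Y Z) = g (nabla X Y) Z + g Y (nabla X Z))
    (hnearly : ∀ X Y : V, nablaJ nabla J X Y + nablaJ nabla J Y X = 0) :
    ∀ X Y : V, nablaJ nabla J X Y = 0 := by
  intro X Y
  have hα2 : α * α = 1 := by rcases hα with h|h <;> rw [h] <;> norm_num
  have hsa : ∀ x y : V, g (J x) y = g x (J y) := by
    intro x y
    have h1 := hJg x (J y)
    rw [hJ2] at h1
    have h2 : α • g (J x) y = ε • g x (J y) := by simpa using h1
    have h3 : α • (α • g (J x) y) = α • (ε • g x (J y)) := by rw [h2]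
    simpa [smul_smul, hα2, hαε] using h3
  have hsym : ∀ X Y Z : V, g (nablaJ nabla J X Y) Z = g (nablaJ nabla J X Z) Y := by
    intro X Y Z
    have e1 := hcompat X (J Y) Z
    have e2 := hcompat X Y (J Z)
    have e0 : g (J Y) Z = g Y (J Z) := hsa Y Z
    have key : g (nabla X (J Y)) Z + g (J Y) (nabla X Z)
        = g (nabla X Y) (J Z) + g Y (nabla X (J Z)) := by
      rw [← e1, ← e2, e0]
    have h3 : g (J Y) (nabla X Z) = g Y (J (nabla X Z)) := hsa Y (nabla X Z)
    have h4 : g (nabla X Y) (J Z) = g (J (nabla X Y)) Z := (hsa (nabla X Y) Z).symm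
    have h5 : g Y (nabla X (J Z)) = g (nabla X (J Z)) Y := hgsymm _ _
    have h6 : g Y (J (nabla X Z)) = g (J (nabla X Z)) Y := hgsymm _ _
    simp only [nablaJ, map_sub, LinearMap.sub_apply]
    linear_combination key - h3 + h4 + h5 - h6
  have hanti : ∀ X Y Z : V, g (nablaJ nabla J X Y) Z = -(g (nablaJ nabla J Y X) Z) := by
    intro X Y Z
    have h : nablaJ nabla J X Y = -(nablaJ nabla J Y X) := by
      rw [eq_neg_iff_add_eq_zero]; exact hnearly X Y
    rw [h, map_neg, LinearMap.neg_apply]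
  apply hgnd
  intro Z
  have c1 : g (nablaJ nabla J X Y) Z = -(g (nablaJ nabla J X Y) Z) := by
    calc g (nablaJ nabla J X Y) Z = g (nablaJ nabla J X Z) Y := hsym X Y Z
      _ = -(g (nablaJ nabla J Z X) Y) := hanti X Z Y
      _ = -(g (nablaJ nabla J Z Y) X) := by rw [hsym Z X Y]
      _ = g (nablaJ nabla J Y Z) X := by rw [← hanti Y Z X]
      _ = g (nablaJ nabla J Y X) Z := hsym Y Z X
      _ = -(g (nablaJ nabla J X Y) Z) := hanti Y X Z
  have c3 : ((2:ℝ)) • g (nablaJ nabla J X Y) Z = 0 := by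
    rw [two_smul]; linear_combination c1
  have h := congrArg (fun t => ((1:ℝ)/2) • t) c3
  simpa [smul_smul] using h
end

section
/- Let (M,J,g) be a (J²=±1)-metric manifold with αε = -1. Then (M,J,g) is nearly Kähler type (i.e., (∇ᵍ_X J)X = 0 for all X) if and only if g(T⁰(X,Y), X) = 0 for all vector fields X,Y, where T⁰ is the torsion of the first canonical connection. -/
/- Abstract algebraic model of a `(J² = ±1)`-metric manifold:
`V` plays the role of the module of (smooth) vector fields (an `ℝ`-vector space),
`F` plays the role of the ring of smooth functions (an `ℝ`-algebra),
`g : V →ₗ[ℝ] V →ₗ[ℝ] F` the metric, `J : V →ₗ[ℝ] V` the almost (para)complex/product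
structure, `nabla : V → V →ₗ[ℝ] V` the Levi-Civita connection, `Xact X : F →ₗ[ℝ] F`
the action of the vector field `X` on functions (`Xact X f = X f`), and
`bracket` the Lie bracket of vector fields. -/

variable {V : Type*} [AddCommGroup V] [Module ℝ V]

/-- If `αε = -1`, the manifold is nearly Kähler type (`(∇ᵍ_X J)X = 0` for all `X`) iff
`g(T⁰(X,Y), X) = 0` for all `X, Y`. -/
theorem stmt13 {F : Type*} [CommRing F] [Algebra ℝ F]
    (α ε : ℝ) (hα : α = 1 ∨ α = -1) (hε : ε = 1 ∨ ε = -1) (hαε : α * ε = -1)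
    (J : V →ₗ[ℝ] V) (hJ2 : ∀ x, J (J x) = α • x)
    (g : V →ₗ[ℝ] V →ₗ[ℝ] F) (hgsymm : ∀ x y, g x y = g y x)
    (hgnd : ∀ x : V, (∀ y : V, g x y = 0) → x = 0)
    (hJg : ∀ x y, g (J x) (J y) = ε • g x y)
    (nabla : V → V →ₗ[ℝ] V) (Xact : V → F →ₗ[ℝ] F)
    (hcompat : ∀ X Y Z : V, Xact X (g Y Z) = g (nabla X Y) Z + g Y (nabla X Z))
    (bracket : V → V → V)
    (htf : ∀ X Y : V, nabla X Y - nabla Y X = bracket X Y) :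
    (∀ X : V, nablaJ nabla J X X = 0) ↔
      (∀ X Y : V, g (torsion0 α nabla J bracket X Y) X = 0) := by
    -- basic scalar facts
  have hαne : α ≠ 0 := by rcases hα with h | h <;> simp [h]
  have hα2 : α * α = 1 := by rcases hα with h | h <;> norm_num [h]
  have hεα : ε = -α := by
    rcases hα with h | h <;> rcases hε with h' | h' <;>
      simp [h, h'] at hαε ⊢ <;> linarith
  -- J is g-anti-self-adjoint
  have hJanti : ∀ A B : V, g (J A) B = - g A (J B) := by
    intro A B
    have h := hJg A (J B)
    rw [hJ2, map_smul] at h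
    have h' : α • g (J A) B = α • (- g A (J B)) := by
      rw [h, hεα, neg_smul, smul_neg]
    exact smul_right_injective F hαne h'
  -- (∇_X J) is g-anti-self-adjoint
  have hanti0 : ∀ X A B : V, g (nablaJ nabla J X A) B = - g A (nablaJ nabla J X B) := by
    intro X A B
    have e1 := hcompat X (J A) B
    have e2 := hcompat X A (J B)
    have e3 := hJanti A B
    have e6 : Xact X (g (J A) B) = - Xact X (g A (J B)) := by rw [e3, map_neg]
    have e4 := hJanti A (nabla X B)
    have e5 := hJanti (nabla X A) B
    simp only [nablaJ, map_sub, LinearMap.sub_apply]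
    linear_combination -e1 - e2 + e6 - e4 - e5
  -- key vanishing: g((∇_Y J)(JX), X) = 0
  have hvan : ∀ X Y : V, g (nablaJ nabla J Y (J X)) X = 0 := by
    intro X Y
    have e1 := hcompat Y (J X) (J X)
    have e2 : Xact Y (g (J X) (J X)) = ε • (g (nabla Y X) X + g X (nabla Y X)) := by
      rw [hJg, map_smul, hcompat]
    have p : g (J X) (nabla Y (J X)) = g (nabla Y (J X)) (J X) := hgsymm _ _
    have q : g X (nabla Y X) = g (nabla Y X) X := hgsymm _ _
    have e5 : (2 : ℝ) • g (nabla Y (J X)) (J X) = (2 : ℝ) • (ε • g (nabla Y X) X) := by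
      rw [two_smul, two_smul]
      calc g (nabla Y (J X)) (J X) + g (nabla Y (J X)) (J X)
          = g (nabla Y (J X)) (J X) + g (J X) (nabla Y (J X)) := by rw [p]
        _ = Xact Y (g (J X) (J X)) := e1.symm
        _ = ε • (g (nabla Y X) X + g X (nabla Y X)) := e2
        _ = ε • g (nabla Y X) X + ε • g (nabla Y X) X := by rw [q, smul_add]
    have e6 : g (nabla Y (J X)) (J X) = ε • g (nabla Y X) X :=
      smul_right_injective F (by norm_num : (2:ℝ) ≠ 0) e5
    have e7 : g (J (nabla Y (J X))) X = - g (nabla Y (J X)) (J X) := hJanti _ _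
    simp only [nablaJ, hJ2, map_smul, map_sub, LinearMap.sub_apply, LinearMap.smul_apply]
    rw [e7, e6, hεα]
    simp
  -- key formula
  have hkey : ∀ X Y : V, g (torsion0 α nabla J bracket X Y) X
      = (α / 2) • g (nablaJ nabla J X X) (J Y) := by
    intro X Y
    have e1 : g (torsion0 α nabla J bracket X Y) X
        = -((α / 2) • g (nablaJ nabla J X (J Y)) X)
          + (α / 2) • g (nablaJ nabla J Y (J X)) X := by
      simp only [torsion0, canon, ← htf, map_sub, map_smul, LinearMap.sub_apply,
        LinearMap.smul_apply]
      ring_nf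
    rw [e1, hvan, hanti0 X (J Y) X, hgsymm]
    simp
  constructor
  · intro h X Y
    rw [hkey, h X]
    simp
  · intro h X
    apply hgnd
    intro Z
    have h1 := h X (α • J Z)
    rw [hkey] at h1
    have hJα : J (α • J Z) = Z := by
      rw [map_smul, hJ2, smul_smul, hα2, one_smul]
    rw [hJα] at h1
    have : (α / 2 : ℝ) ≠ 0 := by
      rcases hα with h' | h' <;> norm_num [h']
    exact smul_right_injective F this (by simpa using h1)
end

section
/- Let (M,J,g) be any (J²=±1)-metric manifold. If the Levi-Civita connection satisfies the Codazzi condition (∇ᵍ_X J)Y - (∇ᵍ_Y J)X = 0 for all vector fields X,Y, then ∇ᵍJ = 0, i.e., (M,J,g) is a Kähler type manifold. -/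
/- Abstract algebraic model of a `(J² = ±1)`-metric manifold:
`V` plays the role of the module of (smooth) vector fields (an `ℝ`-vector space),
`F` plays the role of the ring of smooth functions (an `ℝ`-algebra),
`g : V →ₗ[ℝ] V →ₗ[ℝ] F` the metric, `J : V →ₗ[ℝ] V` the almost (para)complex/product
structure, `nabla : V → V →ₗ[ℝ] V` the Levi-Civita connection, `Xact X : F →ₗ[ℝ] F`
the action of the vector field `X` on functions (`Xact X f = X f`), and
`bracket` the Lie bracket of vector fields. -/

variable {V : Type*} [AddCommGroup V] [Module ℝ V]

/-- If the Levi-Civita connection of a `(J²=±1)`-metric manifold satisfies the Codazzi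
condition `(∇ᵍ_X J)Y - (∇ᵍ_Y J)X = 0`, then `∇ᵍJ = 0` (Kähler type). -/
theorem stmt14 {F : Type*} [CommRing F] [Algebra ℝ F]
    (α ε : ℝ) (hα : α = 1 ∨ α = -1) (hε : ε = 1 ∨ ε = -1)
    (J : V →ₗ[ℝ] V) (hJ2 : ∀ x, J (J x) = α • x)
    (g : V →ₗ[ℝ] V →ₗ[ℝ] F) (hgsymm : ∀ x y, g x y = g y x)
    (hgnd : ∀ x : V, (∀ y : V, g x y = 0) → x = 0)
    (hJg : ∀ x y, g (J x) (J y) = ε • g x y)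
    (nabla : V → V →ₗ[ℝ] V) (Xact : V → F →ₗ[ℝ] F)
    (hcompat : ∀ X Y Z : V, Xact X (g Y Z) = g (nabla X Y) Z + g Y (nabla X Z))
    (hcod : ∀ X Y : V, nablaJ nabla J X Y - nablaJ nabla J Y X = 0) :
    ∀ X Y : V, nablaJ nabla J X Y = 0 := by
  set A : V → V → V := fun X Y => nablaJ nabla J X Y with hA
  have hsym : ∀ X Y, A X Y = A Y X := fun X Y => sub_eq_zero.mp (hcod X Y)
  -- A X (J Y) = - J (A X Y)
  have hanti : ∀ X Y, A X (J Y) = - J (A X Y) := by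
    intro X Y
    simp only [hA, nablaJ, map_sub, hJ2, map_smul]
    abel
  -- ∇_X (J Y) = A X Y + J (∇_X Y)
  have hexp : ∀ X Y, nabla X (J Y) = A X Y + J (nabla X Y) := by
    intro X Y; simp [hA, nablaJ]
  -- key: g (A X Y) (J Z) + g (J Y) (A X Z) = 0
  have hstar : ∀ X Y Z, g (A X Y) (J Z) + g (J Y) (A X Z) = 0 := by
    intro X Y Z
    have h1 : Xact X (g (J Y) (J Z)) =
        g (nabla X (J Y)) (J Z) + g (J Y) (nabla X (J Z)) := hcompat X (J Y) (J Z)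
    have h2 : Xact X (g (J Y) (J Z)) =
        ε • (g (nabla X Y) Z + g Y (nabla X Z)) := by
      rw [hJg, map_smul, hcompat]
    have h3 := h1.symm.trans h2
    rw [hexp, hexp] at h3
    simp only [map_add, LinearMap.add_apply, hJg] at h3
    simp only [Algebra.smul_def] at h3 ⊢
    linear_combination h3
  intro X Y
  have hzero : ∀ Z, g (A X Y) (J Z) = 0 := by
    intro Z
    have e1 := hstar X Y Z
    have e2 := hstar Z X Y
    have e3 := hstar Y Z X
    rw [hgsymm (J Y) (A X Z), hsym X Z] at e1
    rw [hgsymm (J X) (A Z Y), hsym Z Y] at e2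
    rw [hgsymm (J Z) (A Y X), hsym Y X] at e3
    -- e1 : g (A X Y) (J Z) + g (A Z X) (J Y) = 0
    -- e2 : g (A Z X) (J Y) + g (A Y Z) (J X) = 0
    -- e3 : g (A Y Z) (J X) + g (A X Y) (J Z) = 0
    have h2t : g (A X Y) (J Z) + g (A X Y) (J Z) = 0 := by
      linear_combination e1 - e2 + e3
    have : (2:ℝ) • g (A X Y) (J Z) = 0 := by
      rw [two_smul]; exact h2t
    have := congrArg (fun t => (1/2 : ℝ) • t) this
    simpa [smul_smul] using this
  have hzero' : ∀ Z : V, g (A X Y) Z = 0 := by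
    intro Z
    have := hzero (J Z)
    rw [hJ2, map_smul] at this
    rcases hα with h | h <;> simp [h] at this <;> simpa using this
  exact hgnd _ hzero'
end

section
/- Let V be a real vector space with nondegenerate symmetric bilinear form g and endomorphism J with J² = αId, g(Jx,Jy) = εg(x,y), αε = 1. If a trilinear form φ(x,y,z) satisfies φ(x,y,z) = φ(x,z,y), φ(x,Jy,z) = -φ(x,y,Jz), and the total antisymmetrization condition φ(x,y,z) = φ(y,x,z) (Codazzi symmetry in the first two arguments), then φ = 0. -/
/-- Pointwise core of the Kähler-Codazzi theorem in the case `αε = 1`: a trilinear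
form symmetric in its last two arguments, anti-commuting with `J` in the last two
slots, and symmetric in its first two arguments, vanishes identically. -/
theorem stmt17 {V : Type*} [AddCommGroup V] [Module ℝ V]
    (g : V →ₗ[ℝ] V →ₗ[ℝ] ℝ) (hgsymm : ∀ x y, g x y = g y x)
    (hgnd : ∀ x : V, (∀ y : V, g x y = 0) → x = 0)
    (J : V →ₗ[ℝ] V) (α ε : ℝ)
    (hα : α = 1 ∨ α = -1) (hε : ε = 1 ∨ ε = -1) (hαε : α * ε = 1)
    (hJ2 : ∀ x, J (J x) = α • x)
    (hJg : ∀ x y, g (J x) (J y) = ε * g x y)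
    (φ : V →ₗ[ℝ] V →ₗ[ℝ] V →ₗ[ℝ] ℝ)
    (h1 : ∀ x y z, φ x y z = φ x z y)
    (h2 : ∀ x y z, φ x (J y) z = -φ x y (J z))
    (h3 : ∀ x y z, φ x y z = φ y x z) :
    ∀ x y z, φ x y z = 0 := by
  have hα0 : α ≠ 0 := by rcases hα with h | h <;> simp [h]
  -- move J from the first slot to the third with a sign
  have hr : ∀ a b c, φ (J a) b c = -φ a b (J c) := by
    intro a b c
    rw [h3, h2, h3]
  have key : ∀ y z, φ y y z = 0 := by
    intro y z
    have e1 : φ (J y) (J y) z = α * φ y y z := by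
      rw [hr, h2 y y (J z), hJ2]
      simp only [map_smul, smul_eq_mul, neg_neg]
    have e2 : φ (J y) (J y) z = -(α * φ y y z) := by
      rw [h1 (J y) (J y) z, h3 (J y) z (J y), h2, hJ2]
      simp only [map_smul, smul_eq_mul]
      rw [h3 z y y, h1 y z y]
    have : α * φ y y z = 0 := by nlinarith [e1, e2]
    exact (mul_eq_zero.mp this).resolve_left hα0
  intro x y z
  have h := key (x + y) z
  simp only [map_add, LinearMap.add_apply] at h
  rw [key x z, key y z, h3 y x z] at h
  linarith
end
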